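/- arXiv:2011.15006 — 2 statements merged into one kernel-verified Lean document; each statement's English description precedes it below -/
import Mathlib

section
/- Let ω > 0, k > 3, and let f^{in} ∈ L¹(ℝ⁶) ∩ L^∞(ℝ⁶) be measurable with f^{in} ≥ 0 a.e. and M_k(f^{in}) < ∞. Define ρ₀(t,x) := ∫_{ℝ³} f^{in}(X(0;t,x,v), V(0;t,x,v)) dv, where (X,V) are the magnetized free characteristics. Then there exists a constant C > 0, depending only on k, ‖f^{in}‖₁, ‖f^{in}‖_∞ and M_k(f^{in}), such that for all t ≥ 0, ‖ρ₀(t,·)‖_{L^{(3k+9)/(k+6)}(ℝ³)} ≤ C. -/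
open MeasureTheory Real
open scoped ENNReal

/-- The velocity component of the magnetized free characteristics. -/
noncomputable def Vc (ω s t : ℝ) (v : EuclideanSpace ℝ (Fin 3)) : EuclideanSpace ℝ (Fin 3) :=
  WithLp.toLp 2 ![v 0 * Real.cos (ω * (s - t)) + v 1 * Real.sin (ω * (s - t)),
    -(v 0 * Real.sin (ω * (s - t))) + v 1 * Real.cos (ω * (s - t)),
    v 2]

/-- The position component of the magnetized free characteristics. -/
noncomputable def Xc (ω s t : ℝ) (x v : EuclideanSpace ℝ (Fin 3)) : EuclideanSpace ℝ (Fin 3) :=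
  WithLp.toLp 2 ![x 0 + v 0 / ω * Real.sin (ω * (s - t)) + v 1 / ω * (1 - Real.cos (ω * (s - t))),
    x 1 + v 0 / ω * (Real.cos (ω * (s - t)) - 1) + v 1 / ω * Real.sin (ω * (s - t)),
    x 2 + v 2 * (s - t)]

/-- The `k`-th order velocity moment `M_k(f) = ∬ |v|^k f(x,v) dx dv`. -/
noncomputable def momentVel (k : ℝ)
    (f : EuclideanSpace ℝ (Fin 3) × EuclideanSpace ℝ (Fin 3) → ℝ) : ℝ≥0∞ :=
  ∫⁻ z : EuclideanSpace ℝ (Fin 3) × EuclideanSpace ℝ (Fin 3),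
    ENNReal.ofReal (‖z.2‖ ^ k * f z)

noncomputable def rotL (θ : ℝ) : EuclideanSpace ℝ (Fin 3) →ₗ[ℝ] EuclideanSpace ℝ (Fin 3) where
  toFun v := WithLp.toLp 2 ![v 0 * Real.cos θ + v 1 * Real.sin θ,
    -(v 0 * Real.sin θ) + v 1 * Real.cos θ, v 2]
  map_add' u v := by
    ext i
    fin_cases i <;> simp [PiLp.add_apply] <;> ring
  map_smul' c v := by
    ext i
    fin_cases i <;> simp [PiLp.smul_apply, smul_eq_mul] <;> ring

noncomputable def rotE (θ : ℝ) : EuclideanSpace ℝ (Fin 3) ≃ₗᵢ[ℝ] EuclideanSpace ℝ (Fin 3) where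
  toLinearEquiv := LinearEquiv.ofLinear (rotL θ) (rotL (-θ))
    (by
      apply LinearMap.ext; intro v; ext i
      fin_cases i <;>
        simp [rotL, Real.cos_neg, Real.sin_neg] <;>
        first
          | linear_combination (v 0) * Real.sin_sq_add_cos_sq θ
          | linear_combination (v 1) * Real.sin_sq_add_cos_sq θ)
    (by
      apply LinearMap.ext; intro v; ext i
      fin_cases i <;>
        simp [rotL, Real.cos_neg, Real.sin_neg] <;>
        first
          | linear_combination (v 0) * Real.sin_sq_add_cos_sq θ
          | linear_combination (v 1) * Real.sin_sq_add_cos_sq θ)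
  norm_map' v := by
    rw [show ((LinearEquiv.ofLinear (rotL θ) (rotL (-θ)) _ _ : _ ≃ₗ[ℝ] _) : _ → _) v = rotL θ v from rfl]
    rw [EuclideanSpace.norm_eq, EuclideanSpace.norm_eq]
    congr 1
    simp only [rotL, PiLp.toLp_apply, Fin.sum_univ_three, Real.norm_eq_abs, sq_abs, LinearMap.coe_mk,
      AddHom.coe_mk, Matrix.cons_val_zero, Matrix.cons_val_one, Matrix.head_cons,
      Matrix.cons_val_two, Matrix.tail_cons]
    linear_combination (v 0 ^ 2 + v 1 ^ 2) * Real.sin_sq_add_cos_sq θ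

/-- the shift vector -/
noncomputable def shiftV (ω s t : ℝ) (v : EuclideanSpace ℝ (Fin 3)) : EuclideanSpace ℝ (Fin 3) :=
  WithLp.toLp 2 ![v 0 / ω * Real.sin (ω * (s - t)) + v 1 / ω * (1 - Real.cos (ω * (s - t))),
    v 0 / ω * (Real.cos (ω * (s - t)) - 1) + v 1 / ω * Real.sin (ω * (s - t)),
    v 2 * (s - t)]

lemma Xc_eq (ω s t : ℝ) (x v : EuclideanSpace ℝ (Fin 3)) :
    Xc ω s t x v = x + shiftV ω s t v := by
  ext i
  fin_cases i <;> simp [Xc, shiftV, PiLp.add_apply] <;> ring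

lemma Vc_eq (ω s t : ℝ) (v : EuclideanSpace ℝ (Fin 3)) :
    Vc ω s t v = rotE (ω * (s - t)) v := rfl

lemma shiftV_measurable (ω s t : ℝ) : Measurable (shiftV ω s t) := by
  apply (WithLp.measurable_toLp 2 _).comp
  apply measurable_pi_iff.2
  intro i
  fin_cases i <;> simp [shiftV] <;> fun_prop

lemma measurePreserving_T (ω t : ℝ) :
    MeasurePreserving (fun z : EuclideanSpace ℝ (Fin 3) × EuclideanSpace ℝ (Fin 3) =>
      (Xc ω 0 t z.1 z.2, Vc ω 0 t z.2)) volume volume := by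
  have h1 : MeasurePreserving
      (fun q : EuclideanSpace ℝ (Fin 3) × EuclideanSpace ℝ (Fin 3) =>
        (q.1, q.2 + shiftV ω 0 t q.1))
      (volume.prod volume) (volume.prod volume) :=
    (MeasurePreserving.id volume).skew_product
      (g := fun v x => x + shiftV ω 0 t v)
      (measurable_snd.add ((shiftV_measurable ω 0 t).comp measurable_fst))
      (Filter.Eventually.of_forall fun v =>
        (measurePreserving_add_right volume (shiftV ω 0 t v)).map_eq)
  have h2 : MeasurePreserving
      (fun p : EuclideanSpace ℝ (Fin 3) × EuclideanSpace ℝ (Fin 3) =>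
        (p.1 + shiftV ω 0 t p.2, p.2))
      (volume.prod volume) (volume.prod volume) :=
    Measure.measurePreserving_swap.comp (h1.comp Measure.measurePreserving_swap)
  have h3 : MeasurePreserving
      (fun p : EuclideanSpace ℝ (Fin 3) × EuclideanSpace ℝ (Fin 3) =>
        (p.1, rotE (ω * (0 - t)) p.2))
      (volume.prod volume) (volume.prod volume) :=
    (MeasurePreserving.id volume).prod (rotE (ω * (0 - t))).measurePreserving
  have h4 := h3.comp h2
  have hfun : (fun z : EuclideanSpace ℝ (Fin 3) × EuclideanSpace ℝ (Fin 3) =>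
      (Xc ω 0 t z.1 z.2, Vc ω 0 t z.2)) =
      ((fun p : EuclideanSpace ℝ (Fin 3) × EuclideanSpace ℝ (Fin 3) =>
        (p.1, rotE (ω * (0 - t)) p.2)) ∘
       (fun p : EuclideanSpace ℝ (Fin 3) × EuclideanSpace ℝ (Fin 3) =>
        (p.1 + shiftV ω 0 t p.2, p.2))) := by
    funext z
    simp only [Function.comp_apply]
    exact Prod.ext (Xc_eq ω 0 t z.1 z.2) (Vc_eq ω 0 t z.2)
  rw [Measure.volume_eq_prod, hfun]
  exact h4


lemma pointwise_bound (k : ℝ) (hk : 3 < k) (c : ℝ≥0∞)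
    (w : EuclideanSpace ℝ (Fin 3) → ℝ≥0∞) (hw : Measurable w)
    (hbd : ∀ᵐ v ∂(volume), w v ≤ c) :
    ∫⁻ v, w v ≤ (c * volume (Metric.ball (0 : EuclideanSpace ℝ (Fin 3)) 1) + 1) *
      (∫⁻ v, ENNReal.ofReal (‖v‖ ^ k) * w v) ^ (3 / (k + 3)) := by
  set M := ∫⁻ v, ENNReal.ofReal (‖v‖ ^ k) * w v with hM_def
  set C1 := c * volume (Metric.ball (0 : EuclideanSpace ℝ (Fin 3)) 1) + 1 with hC1_def
  have hC1ne : C1 ≠ 0 := by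
    have : (1 : ℝ≥0∞) ≤ C1 := le_add_self
    exact (lt_of_lt_of_le zero_lt_one this).ne'
  have hk3 : (0:ℝ) < k + 3 := by linarith
  have hkpos : (0:ℝ) < k := by linarith
  have hwk : Measurable fun v : EuclideanSpace ℝ (Fin 3) =>
      ENNReal.ofReal (‖v‖ ^ k) * w v := by
    refine (ENNReal.measurable_ofReal.comp ?_).mul hw
    exact (continuous_norm.rpow_const fun x => Or.inr hkpos.le).measurable
  rcases eq_or_ne M ⊤ with hM | hM
  · rw [hM, ENNReal.top_rpow_of_pos (by positivity), ENNReal.mul_top hC1ne]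
    exact le_top
  rcases eq_or_ne M 0 with hM0 | hM0
  · have h0 : ∀ᵐ v ∂(volume), ENNReal.ofReal (‖v‖ ^ k) * w v = 0 :=
      (lintegral_eq_zero_iff hwk).mp hM0
    have h1 : ∀ᵐ v : EuclideanSpace ℝ (Fin 3) ∂(volume), v ≠ 0 := by
      rw [ae_iff]
      simpa using measure_singleton (0 : EuclideanSpace ℝ (Fin 3))
    have hz : ∀ᵐ v ∂(volume), w v = 0 := by
      filter_upwards [h0, h1] with v h h'
      rcases mul_eq_zero.mp h with h | h
      · exact absurd h (ENNReal.ofReal_pos.2 (Real.rpow_pos_of_pos (norm_pos_iff.mpr h') k)).ne'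
      · exact h
    exact le_trans (le_of_eq ((lintegral_eq_zero_iff hw).2 hz)) zero_le
  -- main case
  have hMpos : 0 < M.toReal := ENNReal.toReal_pos hM0 hM
  set R : ℝ := M.toReal ^ (1 / (k + 3)) with hR_def
  have hRpos : 0 < R := Real.rpow_pos_of_pos hMpos _
  have e1 : ENNReal.ofReal (R ^ (3:ℕ)) = M ^ (3 / (k + 3)) := by
    rw [← Real.rpow_natCast R 3, hR_def, ← Real.rpow_mul ENNReal.toReal_nonneg]
    rw [show (1/(k+3) * ((3:ℕ):ℝ)) = 3/(k+3) by push_cast; ring]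
    rw [ENNReal.toReal_rpow, ENNReal.ofReal_toReal (ENNReal.rpow_ne_top_of_nonneg (by positivity) hM)]
  have e2 : ENNReal.ofReal (R ^ k) = M ^ (k / (k + 3)) := by
    rw [hR_def, ← Real.rpow_mul ENNReal.toReal_nonneg]
    rw [show (1/(k+3) * k) = k/(k+3) by ring]
    rw [ENNReal.toReal_rpow, ENNReal.ofReal_toReal (ENNReal.rpow_ne_top_of_nonneg (by positivity) hM)]
  have hsplit : ∫⁻ v, w v = (∫⁻ v in Metric.closedBall 0 R, w v) +
      ∫⁻ v in (Metric.closedBall (0 : EuclideanSpace ℝ (Fin 3)) R)ᶜ, w v :=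
    (lintegral_add_compl w measurableSet_closedBall).symm
  have bound1 : (∫⁻ v in Metric.closedBall (0 : EuclideanSpace ℝ (Fin 3)) R, w v) ≤
      c * volume (Metric.ball (0 : EuclideanSpace ℝ (Fin 3)) 1) * M ^ (3/(k+3)) := by
    calc (∫⁻ v in Metric.closedBall (0 : EuclideanSpace ℝ (Fin 3)) R, w v)
        ≤ ∫⁻ _ in Metric.closedBall (0 : EuclideanSpace ℝ (Fin 3)) R, c :=
          lintegral_mono_ae (ae_restrict_of_ae hbd)
      _ = c * volume (Metric.closedBall (0 : EuclideanSpace ℝ (Fin 3)) R) :=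
          setLIntegral_const _ _
      _ = c * (ENNReal.ofReal (R ^ (3:ℕ)) * volume (Metric.ball (0 : EuclideanSpace ℝ (Fin 3)) 1)) := by
          rw [Measure.addHaar_closedBall volume 0 hRpos.le]
          simp [finrank_euclideanSpace_fin]
      _ = c * volume (Metric.ball (0 : EuclideanSpace ℝ (Fin 3)) 1) * M ^ (3/(k+3)) := by
          rw [e1]; ring
  have hRk0 : ENNReal.ofReal (R ^ k) ≠ 0 :=
    (ENNReal.ofReal_pos.2 (Real.rpow_pos_of_pos hRpos k)).ne'
  have bound2 : (∫⁻ v in (Metric.closedBall (0 : EuclideanSpace ℝ (Fin 3)) R)ᶜ, w v) ≤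
      M ^ (3/(k+3)) := by
    have step1 : (∫⁻ v in (Metric.closedBall (0 : EuclideanSpace ℝ (Fin 3)) R)ᶜ, w v) ≤
        ∫⁻ v in (Metric.closedBall (0 : EuclideanSpace ℝ (Fin 3)) R)ᶜ,
          (ENNReal.ofReal (R ^ k))⁻¹ * (ENNReal.ofReal (‖v‖ ^ k) * w v) := by
      refine setLIntegral_mono (by fun_prop) ?_
      intro v hv
      have hv' : R < ‖v‖ := by
        simp only [Set.mem_compl_iff, Metric.mem_closedBall, dist_zero_right, not_le] at hv
        exact hv
      have hle : ENNReal.ofReal (R ^ k) ≤ ENNReal.ofReal (‖v‖ ^ k) :=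
        ENNReal.ofReal_le_ofReal (Real.rpow_le_rpow hRpos.le hv'.le hkpos.le)
      calc w v = (ENNReal.ofReal (R ^ k))⁻¹ * ENNReal.ofReal (R ^ k) * w v := by
            rw [ENNReal.inv_mul_cancel hRk0 ENNReal.ofReal_ne_top, one_mul]
        _ ≤ (ENNReal.ofReal (R ^ k))⁻¹ * ENNReal.ofReal (‖v‖ ^ k) * w v := by gcongr
        _ = (ENNReal.ofReal (R ^ k))⁻¹ * (ENNReal.ofReal (‖v‖ ^ k) * w v) := mul_assoc _ _ _
    have step2 : (∫⁻ v in (Metric.closedBall (0 : EuclideanSpace ℝ (Fin 3)) R)ᶜ,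
          (ENNReal.ofReal (R ^ k))⁻¹ * (ENNReal.ofReal (‖v‖ ^ k) * w v)) ≤
        (ENNReal.ofReal (R ^ k))⁻¹ * M := by
      rw [lintegral_const_mul' _ _ (ENNReal.inv_ne_top.2 hRk0)]
      gcongr
      exact setLIntegral_le_lintegral _ _
    have e3 : (ENNReal.ofReal (R ^ k))⁻¹ * M = M ^ (3/(k+3)) := by
      rw [e2, ← ENNReal.rpow_neg]
      nth_rewrite 2 [show M = M ^ (1:ℝ) by rw [ENNReal.rpow_one]]
      rw [← ENNReal.rpow_add _ _ hM0 hM]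
      congr 1
      field_simp
      ring
    exact le_trans step1 (le_trans step2 (le_of_eq e3))
  calc ∫⁻ v, w v = _ := hsplit
    _ ≤ c * volume (Metric.ball (0 : EuclideanSpace ℝ (Fin 3)) 1) * M ^ (3/(k+3)) +
        M ^ (3/(k+3)) := add_le_add bound1 bound2
    _ = C1 * M ^ (3/(k+3)) := by rw [hC1_def, add_mul, one_mul]

/-- The final constant. -/
noncomputable def Dconst (k : ℝ) (c A B : ℝ≥0∞) : ℝ≥0∞ :=
  (A ^ (((k+3)/3 - (3*k+9)/(k+6)) / ((k+3)/3 - 1)) *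
    ((c * volume (Metric.ball (0 : EuclideanSpace ℝ (Fin 3)) 1) + 1) ^ ((k+3)/3) * B) ^
      (1 - ((k+3)/3 - (3*k+9)/(k+6)) / ((k+3)/3 - 1))) ^ ((k+6)/(3*k+9))

lemma key (k : ℝ) (hk : 3 < k) (c A B : ℝ≥0∞)
    (W : EuclideanSpace ℝ (Fin 3) × EuclideanSpace ℝ (Fin 3) → ℝ≥0∞) (hW : Measurable W)
    (hbd : ∀ᵐ z ∂((volume : Measure (EuclideanSpace ℝ (Fin 3))).prod volume), W z ≤ c)
    (hA1 : (∫⁻ x, ∫⁻ v, W (x, v)) = A)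
    (hB1 : (∫⁻ x, ∫⁻ v, ENNReal.ofReal (‖v‖ ^ k) * W (x, v)) = B) :
    (∫⁻ x : EuclideanSpace ℝ (Fin 3), (∫⁻ v, W (x, v)) ^ ((3 * k + 9) / (k + 6)))
      ^ ((k + 6) / (3 * k + 9)) ≤ Dconst k c A B := by
  rw [Dconst]
  set q : ℝ := (k+3)/3 with hq_def
  set p : ℝ := (3*k+9)/(k+6) with hp_def
  set θ : ℝ := (q - p)/(q - 1) with hθ_def
  set C1 : ℝ≥0∞ := c * volume (Metric.ball (0 : EuclideanSpace ℝ (Fin 3)) 1) + 1 with hC1_def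
  -- real arithmetic facts
  have hk6 : (0:ℝ) < k + 6 := by linarith
  have hk3 : (0:ℝ) < k + 3 := by linarith
  have hq1 : (1:ℝ) < q := by rw [hq_def]; rw [lt_div_iff₀ (by norm_num : (0:ℝ) < 3)]; linarith
  have hp1 : (1:ℝ) < p := by
    rw [hp_def, lt_div_iff₀ hk6]; linarith
  have hpq : p < q := by
    rw [hp_def, hq_def, div_lt_div_iff₀ hk6 (by norm_num : (0:ℝ) < 3)]
    nlinarith
  have hθpos : 0 < θ := by
    rw [hθ_def]; exact div_pos (by linarith) (by linarith)
  have hθlt : θ < 1 := by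
    rw [hθ_def, div_lt_one (by linarith)]; linarith
  have hppos : (0:ℝ) < p := by linarith
  have hqpos : (0:ℝ) < q := by linarith
  have hexp : θ + (1-θ)*q = p := by
    rw [hθ_def, hq_def, hp_def]
    have h3 : (3:ℝ) ≠ 0 := by norm_num
    have h6 : (k + 6:ℝ) ≠ 0 := by linarith
    have hq1' : ((k+3)/3 - 1 : ℝ) ≠ 0 := by
      have : ((k+3)/3 - 1 : ℝ) = k/3 := by ring
      rw [this]; positivity
    have hk0 : k ≠ 0 := by linarith
    field_simp
    ring_nf
    field_simp
    ring
  -- functions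
  set ρ : EuclideanSpace ℝ (Fin 3) → ℝ≥0∞ := fun x => ∫⁻ v, W (x, v) with hρ_def
  set m : EuclideanSpace ℝ (Fin 3) → ℝ≥0∞ :=
    fun x => ∫⁻ v, ENNReal.ofReal (‖v‖ ^ k) * W (x, v) with hm_def
  have hρm : Measurable ρ := hW.lintegral_prod_right'
  have hmm : Measurable m := by
    apply Measurable.lintegral_prod_right'
      (f := fun z : EuclideanSpace ℝ (Fin 3) × EuclideanSpace ℝ (Fin 3) =>
        ENNReal.ofReal (‖z.2‖ ^ k) * W z)
    refine (ENNReal.measurable_ofReal.comp ?_).mul hW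
    exact ((continuous_norm.comp continuous_snd).rpow_const fun x => Or.inr (by linarith)).measurable
  have hpt : ∀ᵐ x ∂(volume : Measure (EuclideanSpace ℝ (Fin 3))),
      ρ x ≤ C1 * m x ^ (3/(k+3)) := by
    filter_upwards [Measure.ae_ae_of_ae_prod hbd] with x hx
    exact pointwise_bound k hk c _ (hW.comp measurable_prodMk_left) hx
  -- L^q bound
  have hLq : (∫⁻ x, ρ x ^ q) ≤ C1 ^ q * B := by
    have hae : ∀ᵐ x ∂(volume : Measure (EuclideanSpace ℝ (Fin 3))),
        ρ x ^ q ≤ C1 ^ q * m x := by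
      filter_upwards [hpt] with x hx
      calc ρ x ^ q ≤ (C1 * m x ^ (3/(k+3))) ^ q := ENNReal.rpow_le_rpow hx hqpos.le
        _ = C1 ^ q * (m x ^ (3/(k+3))) ^ q := ENNReal.mul_rpow_of_nonneg _ _ hqpos.le
        _ = C1 ^ q * m x := by
            rw [← ENNReal.rpow_mul, show (3/(k+3) * q) = 1 by rw [hq_def]; field_simp,
              ENNReal.rpow_one]
    calc (∫⁻ x, ρ x ^ q) ≤ ∫⁻ x, C1 ^ q * m x := lintegral_mono_ae hae
      _ = C1 ^ q * ∫⁻ x, m x := lintegral_const_mul _ hmm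
      _ = C1 ^ q * B := by rw [← hm_def, hB1]
  -- Hölder
  have hconj : (1/θ).HolderConjugate (1/(1-θ)) :=
    Real.holderConjugate_one_div hθpos (by linarith) (by ring)
  have hHolder := ENNReal.lintegral_mul_le_Lp_mul_Lq volume hconj
    (f := fun x => ρ x ^ θ) (g := fun x => ρ x ^ ((1-θ)*q))
    (hρm.pow_const θ).aemeasurable (hρm.pow_const ((1-θ)*q)).aemeasurable
  have hLp : (∫⁻ x, ρ x ^ p) ≤ A ^ θ * (C1 ^ q * B) ^ (1-θ) := by
    have e1 : ∀ x, (fun x => ρ x ^ θ) x * (fun x => ρ x ^ ((1-θ)*q)) x = ρ x ^ p := by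
      intro x
      rw [← ENNReal.rpow_add_of_nonneg _ _ hθpos.le (by nlinarith), hexp]
    have e2 : ∀ x, (ρ x ^ θ) ^ (1/θ) = ρ x := by
      intro x
      rw [← ENNReal.rpow_mul, mul_one_div_cancel hθpos.ne', ENNReal.rpow_one]
    have e3 : ∀ x, (ρ x ^ ((1-θ)*q)) ^ (1/(1-θ)) = ρ x ^ q := by
      intro x
      rw [← ENNReal.rpow_mul]
      congr 1
      rw [mul_comm (1-θ) q, mul_assoc, mul_one_div, div_self (by linarith : (1:ℝ)-θ ≠ 0), mul_one]
    simp only [Pi.mul_apply, e1, e2, e3] at hHolder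
    rw [one_div_one_div, one_div_one_div] at hHolder
    calc (∫⁻ x, ρ x ^ p) ≤ (∫⁻ x, ρ x) ^ θ * (∫⁻ x, ρ x ^ q) ^ (1-θ) := hHolder
      _ = A ^ θ * (∫⁻ x, ρ x ^ q) ^ (1-θ) := by rw [show (∫⁻ x, ρ x) = A from hA1]
      _ ≤ A ^ θ * (C1 ^ q * B) ^ (1-θ) :=
          mul_le_mul_right (ENNReal.rpow_le_rpow hLq (by linarith)) _
  calc (∫⁻ x, ρ x ^ p) ^ ((k+6)/(3*k+9))
      ≤ (A ^ θ * (C1 ^ q * B) ^ (1-θ)) ^ ((k+6)/(3*k+9)) :=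
        ENNReal.rpow_le_rpow hLp (by positivity)
    _ = _ := rfl

lemma Dconst_ne_top (k : ℝ) (hk : 3 < k) (c A B : ℝ≥0∞)
    (hc : c ≠ ⊤) (hA : A ≠ ⊤) (hB : B ≠ ⊤) : Dconst k c A B ≠ ⊤ := by
  have hθpos : (0:ℝ) ≤ ((k+3)/3 - (3*k+9)/(k+6)) / ((k+3)/3 - 1) := by
    apply div_nonneg
    · rw [sub_nonneg, div_le_div_iff₀ (by linarith) (by norm_num)]
      nlinarith
    · rw [sub_nonneg, le_div_iff₀ (by norm_num)]; linarith
  have hd : (0:ℝ) < (k+3)/3 - 1 := by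
    have : ((k+3)/3 - 1 : ℝ) = k/3 := by ring
    rw [this]; positivity
  have hθle : ((k+3)/3 - (3*k+9)/(k+6)) / ((k+3)/3 - 1) ≤ 1 := by
    rw [div_le_one hd]
    have h1 : (1:ℝ) ≤ (3*k+9)/(k+6) := by
      rw [le_div_iff₀ (by linarith : (0:ℝ) < k+6)]; linarith
    linarith
  have hC1t : (c * volume (Metric.ball (0 : EuclideanSpace ℝ (Fin 3)) 1) + 1) ≠ ⊤ :=
    ENNReal.add_ne_top.2 ⟨ENNReal.mul_ne_top hc measure_ball_lt_top.ne, ENNReal.one_ne_top⟩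
  apply ENNReal.rpow_ne_top_of_nonneg (by positivity)
  apply ENNReal.mul_ne_top
  · exact ENNReal.rpow_ne_top_of_nonneg hθpos hA
  · apply ENNReal.rpow_ne_top_of_nonneg (by linarith)
    exact ENNReal.mul_ne_top (ENNReal.rpow_ne_top_of_nonneg (by positivity) hC1t) hB

/-- with `ρ₀(t,x) = ∫ f^{in}(X(0;t,x,v), V(0;t,x,v)) dv`, there is a
constant `C > 0` (depending only on `k, ‖f^{in}‖₁, ‖f^{in}‖_∞, M_k(f^{in})`) such that
`‖ρ₀(t,·)‖_{L^{(3k+9)/(k+6)}} ≤ C` for all `t ≥ 0`. -/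
theorem rho0_bound (ω : ℝ) (hω : 0 < ω) (k : ℝ) (hk : 3 < k)
    (fin : EuclideanSpace ℝ (Fin 3) × EuclideanSpace ℝ (Fin 3) → ℝ)
    (hmeas : Measurable fin) (hpos : ∀ᵐ z ∂(volume), 0 ≤ fin z)
    (hL1 : MemLp fin 1 volume) (hLinf : MemLp fin ⊤ volume)
    (hMk : momentVel k fin < ⊤) :
    ∃ C : ℝ, 0 < C ∧ ∀ t : ℝ, 0 ≤ t →
      (∫⁻ x : EuclideanSpace ℝ (Fin 3),
          (∫⁻ v : EuclideanSpace ℝ (Fin 3),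
            ENNReal.ofReal (fin (Xc ω 0 t x v, Vc ω 0 t v))) ^ ((3 * k + 9) / (k + 6)))
        ^ ((k + 6) / (3 * k + 9)) ≤ ENNReal.ofReal C := by
  set Ninf : ℝ≥0∞ := eLpNorm fin ⊤ volume with hNinf_def
  have hNinf_ne : Ninf ≠ ⊤ := hLinf.2.ne
  set I1 : ℝ≥0∞ := ∫⁻ z, ENNReal.ofReal (fin z) with hI1_def
  have hI1_ne : I1 ≠ ⊤ := by
    have hle : I1 ≤ eLpNorm fin 1 volume := by
      rw [hI1_def, eLpNorm_one_eq_lintegral_enorm]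
      exact lintegral_mono fun z => Real.ofReal_le_enorm (fin z)
    exact (lt_of_le_of_lt hle hL1.2).ne
  have hofm : Measurable fun z => ENNReal.ofReal (fin z) :=
    ENNReal.measurable_ofReal.comp hmeas
  have h0 : ∀ᵐ z ∂(volume : Measure (EuclideanSpace ℝ (Fin 3) × EuclideanSpace ℝ (Fin 3))),
      ENNReal.ofReal (fin z) ≤ Ninf := by
    filter_upwards [ae_le_essSup (μ := volume) (f := fun z => ‖fin z‖ₑ)] with z hz
    refine le_trans (Real.ofReal_le_enorm (fin z)) (le_trans hz ?_)
    rw [hNinf_def, eLpNorm_exponent_top]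
    rfl
  set D : ℝ≥0∞ := Dconst k Ninf I1 (momentVel k fin) with hD_def
  have hD_ne : D ≠ ⊤ := Dconst_ne_top k hk _ _ _ hNinf_ne hI1_ne hMk.ne
  refine ⟨D.toReal + 1, by positivity, fun t _ => ?_⟩
  -- the transformed density
  set T : EuclideanSpace ℝ (Fin 3) × EuclideanSpace ℝ (Fin 3) →
      EuclideanSpace ℝ (Fin 3) × EuclideanSpace ℝ (Fin 3) :=
    fun z => (Xc ω 0 t z.1 z.2, Vc ω 0 t z.2) with hT_def
  have hT : MeasurePreserving T volume volume := measurePreserving_T ω t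
  set W : EuclideanSpace ℝ (Fin 3) × EuclideanSpace ℝ (Fin 3) → ℝ≥0∞ :=
    fun z => ENNReal.ofReal (fin (T z)) with hW_def
  have hWme : Measurable W := hofm.comp hT.measurable
  have hbdT : ∀ᵐ z ∂((volume : Measure (EuclideanSpace ℝ (Fin 3))).prod volume), W z ≤ Ninf := by
    rw [← Measure.volume_eq_prod]
    have hS : MeasurableSet {z : EuclideanSpace ℝ (Fin 3) × EuclideanSpace ℝ (Fin 3) |
        ENNReal.ofReal (fin z) ≤ Ninf} := measurableSet_le hofm measurable_const
    exact (ae_map_iff hT.measurable.aemeasurable hS).mp (by rw [hT.map_eq]; exact h0)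
  have hA1 : (∫⁻ x, ∫⁻ v, W (x, v)) = I1 := by
    calc (∫⁻ x, ∫⁻ v, W (x, v))
        = ∫⁻ z, W z ∂((volume : Measure (EuclideanSpace ℝ (Fin 3))).prod volume) :=
          (lintegral_prod W hWme.aemeasurable).symm
      _ = ∫⁻ z, W z := by rw [← Measure.volume_eq_prod]
      _ = ∫⁻ z, ENNReal.ofReal (fin z) := hT.lintegral_comp hofm
  have hnorm : ∀ v : EuclideanSpace ℝ (Fin 3), ‖Vc ω 0 t v‖ = ‖v‖ := by
    intro v; rw [Vc_eq]; exact (rotE (ω * (0 - t))).norm_map v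
  have hGme : Measurable fun z : EuclideanSpace ℝ (Fin 3) × EuclideanSpace ℝ (Fin 3) =>
      ENNReal.ofReal (‖z.2‖ ^ k) * W z := by
    refine (ENNReal.measurable_ofReal.comp ?_).mul hWme
    exact ((continuous_norm.comp continuous_snd).rpow_const
      fun x => Or.inr (by linarith)).measurable
  have hB1 : (∫⁻ x, ∫⁻ v, ENNReal.ofReal (‖v‖ ^ k) * W (x, v)) = momentVel k fin := by
    have hGT : ∀ z : EuclideanSpace ℝ (Fin 3) × EuclideanSpace ℝ (Fin 3),
        ENNReal.ofReal (‖z.2‖ ^ k) * W z = ENNReal.ofReal (‖(T z).2‖ ^ k * fin (T z)) := by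
      intro z
      rw [ENNReal.ofReal_mul (Real.rpow_nonneg (norm_nonneg _) k), hW_def]
      congr 2
      show ‖z.2‖ ^ k = ‖Vc ω 0 t z.2‖ ^ k
      rw [hnorm]
    calc (∫⁻ x, ∫⁻ v, ENNReal.ofReal (‖v‖ ^ k) * W (x, v))
        = ∫⁻ z, ENNReal.ofReal (‖z.2‖ ^ k) * W z
            ∂((volume : Measure (EuclideanSpace ℝ (Fin 3))).prod volume) :=
          (lintegral_prod _ hGme.aemeasurable).symm
      _ = ∫⁻ z, ENNReal.ofReal (‖z.2‖ ^ k) * W z := by rw [← Measure.volume_eq_prod]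
      _ = ∫⁻ z, ENNReal.ofReal (‖(T z).2‖ ^ k * fin (T z)) := by
          exact lintegral_congr fun z => hGT z
      _ = ∫⁻ z, ENNReal.ofReal (‖z.2‖ ^ k * fin z) := by
          have hGm2 : Measurable fun z : EuclideanSpace ℝ (Fin 3) × EuclideanSpace ℝ (Fin 3) =>
              ENNReal.ofReal (‖z.2‖ ^ k * fin z) := by
            apply ENNReal.measurable_ofReal.comp
            exact Measurable.mul
              (((continuous_norm.comp continuous_snd).rpow_const
                fun x => Or.inr (by linarith)).measurable) hmeas
          exact hT.lintegral_comp hGm2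
      _ = momentVel k fin := rfl
  have hkey := key k hk Ninf I1 (momentVel k fin) W hWme hbdT hA1 hB1
  refine le_trans ?_ (le_trans (le_of_eq (ENNReal.ofReal_toReal hD_ne).symm)
    (ENNReal.ofReal_le_ofReal (by linarith : D.toReal ≤ D.toReal + 1)))
  exact hkey
end

section
/- Let R ≥ 0, ω ≥ 0, t > 0, x, v ∈ ℝ³. Let V: [0,t] → ℝ³ be continuously differentiable with V(t) = v and |V'(s)| ≤ R + ω|V(s)| for all s ∈ [0,t], and let X: [0,t] → ℝ³ satisfy X'(s) = V(s) and X(t) = x. Then |X(0) − (x − t v)| ≤ (R + ω|v|) t² e^{ωt}. -/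
open Real

/-- backward bound on the spatial characteristic: if `V(t) = v`,
`|V'(s)| ≤ R + ω|V(s)|`, `X' = V` and `X(t) = x` on `[0,t]`, then
`|X(0) − (x − t v)| ≤ (R + ω|v|) t² e^{ωt}`. -/
theorem spatial_characteristic_bound (R ω t : ℝ) (hR : 0 ≤ R) (hω : 0 ≤ ω)
    (ht : 0 < t) (x v : EuclideanSpace ℝ (Fin 3))
    (X V V' : ℝ → EuclideanSpace ℝ (Fin 3))
    (hV' : ContinuousOn V' (Set.Icc 0 t))
    (hVderiv : ∀ s ∈ Set.Icc 0 t, HasDerivAt V (V' s) s)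
    (hbound : ∀ s ∈ Set.Icc 0 t, ‖V' s‖ ≤ R + ω * ‖V s‖)
    (hVt : V t = v)
    (hXderiv : ∀ s ∈ Set.Icc 0 t, HasDerivAt X (V s) s)
    (hXt : X t = x) :
    ‖X 0 - (x - t • v)‖ ≤ (R + ω * ‖v‖) * t ^ 2 * Real.exp (ω * t) := by
  set ε : ℝ := R + ω * ‖v‖ with hε
  have hε0 : 0 ≤ ε := by positivity
  -- the reversed-time function g(s) = V(t - s) - v
  set g : ℝ → EuclideanSpace ℝ (Fin 3) := fun s => V (t - s) - v with hg
  have hgderiv : ∀ s ∈ Set.Icc (0:ℝ) t, HasDerivAt g (-(V' (t - s))) s := by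
    intro s hs
    have hts : t - s ∈ Set.Icc (0:ℝ) t := by
      constructor <;> [linarith [hs.2]; linarith [hs.1]]
    have hinner : HasDerivAt (fun s : ℝ => t - s) (-1 : ℝ) s := by
      simpa using (hasDerivAt_id s).const_sub t
    have h1 : HasDerivAt (fun s : ℝ => V (t - s)) ((-1 : ℝ) • V' (t - s)) s :=
      (hVderiv _ hts).scomp s hinner
    have := h1.sub_const v
    simpa [hg] using this
  have hgcont : ContinuousOn g (Set.Icc 0 t) := by
    intro s hs
    have hts : t - s ∈ Set.Icc (0:ℝ) t := by
      constructor <;> [linarith [hs.2]; linarith [hs.1]]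
    exact ((hgderiv s hs).continuousAt).continuousWithinAt
  -- Gronwall: ‖g s‖ ≤ gronwallBound 0 ω ε s
  have hgron : ∀ s ∈ Set.Icc (0:ℝ) t, ‖g s‖ ≤ gronwallBound 0 ω ε (s - 0) := by
    apply norm_le_gronwallBound_of_norm_deriv_right_le hgcont
    · intro s hs
      exact (hgderiv s (Set.mem_Icc_of_Ico hs)).hasDerivWithinAt
    · simp [hg, hVt]
    · intro s hs
      have hts : t - s ∈ Set.Icc (0:ℝ) t := by
        constructor <;> [linarith [hs.2.le]; linarith [hs.1]]
      calc ‖-(V' (t - s))‖ = ‖V' (t - s)‖ := norm_neg _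
        _ ≤ R + ω * ‖V (t - s)‖ := hbound _ hts
        _ ≤ R + ω * (‖g s‖ + ‖v‖) := by
            have h := norm_sub_norm_le (V (t - s)) v
            have hgs : ‖g s‖ = ‖V (t - s) - v‖ := by simp [hg]
            nlinarith [norm_nonneg (V (t - s) - v)]
        _ = ω * ‖g s‖ + ε := by ring
  -- uniform bound: gronwallBound 0 ω ε s ≤ ε * t * exp (ω * t)
  have hgb : ∀ s ∈ Set.Icc (0:ℝ) t, gronwallBound 0 ω ε s ≤ ε * t * Real.exp (ω * t) := by
    intro s hs
    rcases eq_or_lt_of_le hω with h0 | h0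
    · rw [← h0, gronwallBound_K0]
      have : Real.exp (0 * t) = 1 := by simp
      rw [← h0] at *
      simp only [zero_add]
      calc ε * s ≤ ε * t := by nlinarith [hs.2, hε0]
        _ ≤ ε * t * Real.exp (0 * t) := by simp
    · rw [gronwallBound_of_K_ne_0 (ne_of_gt h0)]
      simp only [zero_mul, zero_add]
      have key : Real.exp (ω * s) - 1 ≤ ω * s * Real.exp (ω * s) := by
        have h := Real.add_one_le_exp (-(ω * s))
        rw [Real.exp_neg] at h
        have hp := Real.exp_pos (ω * s)
        have := mul_le_mul_of_nonneg_left h hp.le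
        rw [mul_inv_cancel₀ hp.ne'] at this
        nlinarith
      have hexp : Real.exp (ω * s) ≤ Real.exp (ω * t) :=
        Real.exp_le_exp.2 (by nlinarith [hs.2])
      have h1 : ε / ω * (Real.exp (ω * s) - 1) ≤ ε / ω * (ω * s * Real.exp (ω * s)) := by
        apply mul_le_mul_of_nonneg_left key (by positivity)
      have h2 : ε / ω * (ω * s * Real.exp (ω * s)) = ε * s * Real.exp (ω * s) := by
        field_simp
      rw [h2] at h1
      refine h1.trans ?_
      have h3 : ε * s ≤ ε * t := mul_le_mul_of_nonneg_left hs.2 hε0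
      exact mul_le_mul h3 hexp (Real.exp_pos _).le (by nlinarith [hs.1])
  -- velocity bound
  have hVbound : ∀ u ∈ Set.Icc (0:ℝ) t, ‖v - V u‖ ≤ ε * t * Real.exp (ω * t) := by
    intro u hu
    have hsu : t - u ∈ Set.Icc (0:ℝ) t := by
      constructor <;> [linarith [hu.2]; linarith [hu.1]]
    have h := hgron _ hsu
    rw [sub_zero] at h
    have := h.trans (hgb _ hsu)
    simpa [hg, norm_sub_rev, sub_sub_cancel] using this
  -- FTC: X t - X 0 = ∫ V
  have hVcont : ContinuousOn V (Set.Icc 0 t) := fun s hs =>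
    ((hVderiv s hs).continuousAt).continuousWithinAt
  have hint : IntervalIntegrable V MeasureTheory.volume 0 t := by
    apply ContinuousOn.intervalIntegrable
    rwa [Set.uIcc_of_le ht.le]
  have hftc : ∫ s in (0:ℝ)..t, V s = X t - X 0 := by
    apply intervalIntegral.integral_eq_sub_of_hasDerivAt
    · intro s hs
      rw [Set.uIcc_of_le ht.le] at hs
      exact hXderiv s hs
    · exact hint
  have hkey : X 0 - (x - t • v) = ∫ s in (0:ℝ)..t, (v - V s) := by
    have hcv : ∫ s in (0:ℝ)..t, (v : EuclideanSpace ℝ (Fin 3)) = t • v := by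
      simp
    rw [intervalIntegral.integral_sub (by
      apply ContinuousOn.intervalIntegrable
      exact continuousOn_const) hint, hcv, hftc, hXt]
    abel
  rw [hkey]
  calc ‖∫ s in (0:ℝ)..t, (v - V s)‖ ≤ ε * t * Real.exp (ω * t) * |t - 0| := by
        apply intervalIntegral.norm_integral_le_of_norm_le_const
        intro s hs
        rw [Set.uIoc_of_le ht.le] at hs
        exact hVbound s ⟨hs.1.le, hs.2⟩
    _ = ε * t ^ 2 * Real.exp (ω * t) := by
        rw [abs_of_nonneg (by linarith)]; ring
end
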